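/- Let (Y, ρ) be a metric space, X a finite set with a semi-metric δ, A: X → ℝ≥0 a function satisfying |A(x) − A(x')| ≤ δ(x, x') for all x, x' ∈ X, and g > 0. Suppose that for every real r ∈ [g/60, g/30] there is a map φ_r: X → Y such that ρ(φ_r(x), φ_r(x')) ≤ 2δ(x,x') whenever A(x), A(x'), δ(x,x') ≤ r, and φ_r(x) = y₀ (a fixed basepoint) whenever A(x) > r, and the diameter of the image is at most Δ. Then choosing r uniformly at random from [g/60, g/30], for every pair x, x' with δ(x,x') ≤ g/60: E[ρ(φ_r(x), φ_r(x'))] ≤ (60Δ/g + 2) · δ(x,x'). -/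

import Mathlib

open MeasureTheory

/-- Let `(Y, ρ)` be a metric space with basepoint `y₀`, `X` a finite set
with a semi-metric `δ`, `A : X → ℝ≥0` with `|A(x) − A(x')| ≤ δ(x,x')`, and `g > 0`. Suppose
that for every `r ∈ [g/60, g/30]` there is a map `φ_r : X → Y` with:
`ρ(φ_r(x), φ_r(x')) ≤ 2δ(x,x')` whenever `A(x), A(x'), δ(x,x') ≤ r`; `φ_r(x) = y₀` whenever
`A(x) > r`; and the image has diameter at most `Δ`. Then for `r` uniform on `[g/60, g/30]`
and every pair with `δ(x,x') ≤ g/60`: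
`E[ρ(φ_r(x), φ_r(x'))] ≤ (60Δ/g + 2)·δ(x,x')`. -/
theorem stmt_16 {X Y : Type*} [Fintype X] [MetricSpace Y]
    (δ : X → X → ℝ)
    (hnonneg : ∀ a b, 0 ≤ δ a b) (hsymm : ∀ a b, δ a b = δ b a)
    (hself : ∀ a, δ a a = 0) (htri : ∀ a b c, δ a c ≤ δ a b + δ b c)
    (A : X → ℝ) (hA0 : ∀ x, 0 ≤ A x) (hLip : ∀ x x', |A x - A x'| ≤ δ x x')
    (g Δ : ℝ) (hg : 0 < g) (y₀ : Y) (φ : ℝ → X → Y)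
    (hclose : ∀ r ∈ Set.Icc (g / 60) (g / 30), ∀ x x' : X,
      A x ≤ r → A x' ≤ r → δ x x' ≤ r → dist (φ r x) (φ r x') ≤ 2 * δ x x')
    (hfar : ∀ r ∈ Set.Icc (g / 60) (g / 30), ∀ x : X, r < A x → φ r x = y₀)
    (hdiam : ∀ r ∈ Set.Icc (g / 60) (g / 30), ∀ x x' : X, dist (φ r x) (φ r x') ≤ Δ)
    (x x' : X) (hxx' : δ x x' ≤ g / 60) :
    ⨍ r in Set.Icc (g / 60) (g / 30), dist (φ r x) (φ r x')
      ≤ (60 * Δ / g + 2) * δ x x' := by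
  have hδ : 0 ≤ δ x x' := hnonneg x x'
  have hmem : (g/60) ∈ Set.Icc (g/60) (g/30) := ⟨le_refl _, by linarith⟩
  have hΔ : 0 ≤ Δ := le_trans dist_nonneg (hdiam (g/60) hmem x x)
  set m := min (A x) (A x') with hm
  set M := max (A x) (A x') with hM
  have hMm : M - m ≤ δ x x' := by
    rw [hM, hm, max_sub_min_eq_abs, abs_sub_comm]; exact hLip x x'
  set G : ℝ → ℝ := fun r => 2 * δ x x' + Set.indicator (Set.Icc m M) (fun _ => Δ) r with hG
  set μ := volume.restrict (Set.Icc (g/60) (g/30)) with hμ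
  have hGint : Integrable G μ :=
    (integrable_const _).add ((integrable_const Δ).indicator measurableSet_Icc)
  have hbound : ∀ r ∈ Set.Icc (g/60) (g/30), dist (φ r x) (φ r x') ≤ G r := by
    intro r hr
    have hind : 0 ≤ Set.indicator (Set.Icc m M) (fun _ => Δ) r :=
      Set.indicator_nonneg (fun _ _ => hΔ) r
    rcases lt_or_ge r m with h1 | h1
    · have hx : φ r x = y₀ := hfar r hr x (lt_of_lt_of_le h1 (min_le_left _ _))
      have hx' : φ r x' = y₀ := hfar r hr x' (lt_of_lt_of_le h1 (min_le_right _ _))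
      rw [hx, hx', dist_self]
      simp only [hG]; positivity
    · rcases le_or_gt M r with h2 | h2
      · have := hclose r hr x x' (le_trans (le_max_left _ _) h2)
          (le_trans (le_max_right _ _) h2) (le_trans hxx' hr.1)
        simp only [hG]; linarith
      · have hrmem : r ∈ Set.Icc m M := ⟨h1, le_of_lt h2⟩
        have heq : Set.indicator (Set.Icc m M) (fun _ => Δ) r = Δ :=
          Set.indicator_of_mem hrmem _
        simp only [hG, heq]
        have := hdiam r hr x x'
        linarith
  have hae : ∀ᵐ r ∂μ, dist (φ r x) (φ r x') ≤ G r := by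
    rw [hμ]
    exact (ae_restrict_iff' measurableSet_Icc).mpr (Filter.Eventually.of_forall hbound)
  have hint_le : ∫ r, dist (φ r x) (φ r x') ∂μ ≤ ∫ r, G r ∂μ :=
    integral_mono_of_nonneg (Filter.Eventually.of_forall fun r => dist_nonneg) hGint hae
  have hlen : (volume (Set.Icc (g/60) (g/30))).toReal = g / 60 := by
    rw [Real.volume_Icc, ENNReal.toReal_ofReal (by linarith)]
    ring
  set t := (μ (Set.Icc m M)).toReal with ht
  have ht0 : 0 ≤ t := ENNReal.toReal_nonneg
  have htle : t ≤ δ x x' := by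
    have h1 : μ (Set.Icc m M) ≤ volume (Set.Icc m M) := by
      rw [hμ]; exact Measure.restrict_le_self _
    have h2 : (volume (Set.Icc m M)).toReal ≤ δ x x' := by
      rw [Real.volume_Icc]
      rcases le_or_gt m M with h | h
      · rw [ENNReal.toReal_ofReal (by linarith)]; linarith
      · rw [ENNReal.ofReal_of_nonpos (by linarith)]; simpa using hδ
    calc t ≤ (volume (Set.Icc m M)).toReal :=
          ENNReal.toReal_mono (by rw [Real.volume_Icc]; exact ENNReal.ofReal_ne_top) h1
      _ ≤ δ x x' := h2
  have hGeq : ∫ r, G r ∂μ = 2 * δ x x' * (g/60) + t * Δ := by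
    rw [hG]
    rw [integral_add (integrable_const _) ((integrable_const Δ).indicator measurableSet_Icc)]
    rw [integral_const, integral_indicator_const _ measurableSet_Icc]
    rw [hμ, measureReal_def, measureReal_def, Measure.restrict_apply_univ, hlen]
    rw [← ht]
    simp [smul_eq_mul]
    ring
  have havg : ⨍ r in Set.Icc (g/60) (g/30), dist (φ r x) (φ r x')
      = (g/60)⁻¹ * ∫ r, dist (φ r x) (φ r x') ∂μ := by
    rw [setAverage_eq, measureReal_def, hlen, smul_eq_mul, hμ]
  rw [havg]
  have hpos : (0:ℝ) < g/60 := by linarith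
  have key : (g/60)⁻¹ * ∫ r, dist (φ r x) (φ r x') ∂μ
      ≤ (g/60)⁻¹ * (2 * δ x x' * (g/60) + t * Δ) := by
    apply mul_le_mul_of_nonneg_left _ (by positivity)
    rw [← hGeq]; exact hint_le
  refine key.trans ?_
  have htΔ : t * Δ ≤ δ x x' * Δ := mul_le_mul_of_nonneg_right htle hΔ
  rw [inv_mul_le_iff₀ hpos]
  have hrhs : (60 * Δ / g + 2) * δ x x' * (g/60) = δ x x' * Δ + 2 * δ x x' * (g/60) := by
    field_simp
  linarith
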